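/- The class of (H0,H1)-smooth functions is closed under affine transformations: if g: ℝ^q → ℝ is (H0^g, H1^g)-smooth with infimum g*, A ∈ ℝ^{q×p} is any matrix, b ∈ ℝ^q any vector, and f(w) := g(Aw + b) has infimum f*, then f is (H0^f, H1^f)-smooth with H0^f = ‖A‖²(H0^g + H1^g(f* − g*)) and H1^f = ‖A‖²·H1^g, where ‖A‖ is the operator norm. In particular f* ≥ g*. -/

import Mathlib

private lemma fderiv_shift {E F : Type*} [NormedAddCommGroup E] [NormedSpace ℝ E]
    [NormedAddCommGroup F] [NormedSpace ℝ F] (h : E → F) (b x : E) :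
    fderiv ℝ (fun y => h (y + b)) x = fderiv ℝ h (x + b) := by
  by_cases hd : DifferentiableAt ℝ h (x + b)
  · have h1 : HasFDerivAt (fun y : E => y + b) (ContinuousLinearMap.id ℝ E) x :=
      (hasFDerivAt_id x).add_const b
    have := (hd.hasFDerivAt.comp x h1).fderiv
    simpa [Function.comp_def] using this
  · have hd' : ¬ DifferentiableAt ℝ (fun y => h (y + b)) x := by
      intro hc
      have hsub : DifferentiableAt ℝ (fun z : E => z - b) (x + b) :=
        differentiableAt_id.sub_const b
      have hc' : DifferentiableAt ℝ (fun y => h (y + b)) ((x + b) - b) := by simpa using hc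
      have := hc'.comp (x + b) hsub
      apply hd
      have heq : ((fun y => h (y + b)) ∘ fun z : E => z - b) = h := by
        funext z; simp
      rwa [heq] at this
    rw [fderiv_zero_of_not_differentiableAt hd, fderiv_zero_of_not_differentiableAt hd']

private lemma iteratedFDeriv_shift {E F : Type*} [NormedAddCommGroup E] [NormedSpace ℝ E]
    [NormedAddCommGroup F] [NormedSpace ℝ F] (g : E → F) (b : E) :
    ∀ (n : ℕ) (x : E),
      iteratedFDeriv ℝ n (fun y => g (y + b)) x = iteratedFDeriv ℝ n g (x + b) := by
  intro n
  induction n with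
  | zero => intro x; ext m; simp [iteratedFDeriv_zero_apply]
  | succ n IH =>
    intro x
    ext m
    rw [iteratedFDeriv_succ_apply_left, iteratedFDeriv_succ_apply_left]
    have key : fderiv ℝ (iteratedFDeriv ℝ n fun y => g (y + b)) x =
        fderiv ℝ (iteratedFDeriv ℝ n g) (x + b) := by
      have : (iteratedFDeriv ℝ n fun y => g (y + b)) =
          fun x => iteratedFDeriv ℝ n g (x + b) := funext IH
      rw [this]
      exact fderiv_shift _ b x
    rw [key]

/-- The class of `(H0,H1)`-smooth functions is closed under affine transformations. -/
theorem stmt_1 {p q : ℕ} (g : EuclideanSpace ℝ (Fin q) → ℝ)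
    (H0g H1g gstar fstar : ℝ)
    (A : EuclideanSpace ℝ (Fin p) →L[ℝ] EuclideanSpace ℝ (Fin q))
    (b : EuclideanSpace ℝ (Fin q))
    (hH0g : 0 ≤ H0g) (hH1g : 0 ≤ H1g)
    (hg : ContDiff ℝ 2 g)
    (hgstar : IsGLB (Set.range g) gstar)
    (hfstar : IsGLB (Set.range fun w => g (A w + b)) fstar)
    (hsg : ∀ y, ‖iteratedFDeriv ℝ 2 g y‖ ≤ H0g + H1g * (g y - gstar)) :
    (∀ w, ‖iteratedFDeriv ℝ 2 (fun w => g (A w + b)) w‖ ≤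
        ‖A‖ ^ 2 * (H0g + H1g * (fstar - gstar))
          + (‖A‖ ^ 2 * H1g) * (g (A w + b) - fstar)) ∧
    gstar ≤ fstar := by
  have hglb : gstar ≤ fstar := by
    apply hfstar.2
    rintro x ⟨w, rfl⟩
    exact hgstar.1 ⟨A w + b, rfl⟩
  refine ⟨fun w => ?_, hglb⟩
  set h : EuclideanSpace ℝ (Fin q) → ℝ := fun y => g (y + b) with hh_def
  have hh : ContDiff ℝ 2 h := hg.comp (contDiff_id.add contDiff_const)
  have hcomp : (fun w => g (A w + b)) = h ∘ A := rfl
  have hstep : iteratedFDeriv ℝ 2 (fun w => g (A w + b)) w =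
      (iteratedFDeriv ℝ 2 h (A w)).compContinuousLinearMap fun _ => A := by
    rw [hcomp]
    exact A.iteratedFDeriv_comp_right hh w (le_refl _)
  have hnorm1 : ‖iteratedFDeriv ℝ 2 (fun w => g (A w + b)) w‖ ≤
      ‖iteratedFDeriv ℝ 2 h (A w)‖ * ‖A‖ ^ 2 := by
    rw [hstep]
    have := (iteratedFDeriv ℝ 2 h (A w)).norm_compContinuousLinearMap_le fun _ => A
    simpa [Fin.prod_const, pow_two] using this
  have hshift : ‖iteratedFDeriv ℝ 2 h (A w)‖ = ‖iteratedFDeriv ℝ 2 g (A w + b)‖ := by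
    rw [hh_def, iteratedFDeriv_shift g b 2 (A w)]
  have hb : ‖iteratedFDeriv ℝ 2 h (A w)‖ ≤ H0g + H1g * (g (A w + b) - gstar) := by
    rw [hshift]; exact hsg (A w + b)
  have : ‖iteratedFDeriv ℝ 2 (fun w => g (A w + b)) w‖ ≤
      (H0g + H1g * (g (A w + b) - gstar)) * ‖A‖ ^ 2 :=
    hnorm1.trans (by
      apply mul_le_mul_of_nonneg_right hb (by positivity))
  calc ‖iteratedFDeriv ℝ 2 (fun w => g (A w + b)) w‖
      ≤ (H0g + H1g * (g (A w + b) - gstar)) * ‖A‖ ^ 2 := this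
    _ = ‖A‖ ^ 2 * (H0g + H1g * (fstar - gstar))
          + (‖A‖ ^ 2 * H1g) * (g (A w + b) - fstar) := by ring
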